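/- Let M be the symmetric regular (0,1/(n−1))-biangular matrix of order N = n(n−1) constructed from a Hadamard matrix of order n and the addition table of Z_{n−1}, and define (0,1)-matrices A_0 = I_N, A_1, A_2, A_3, A_4 by M = A_0 + A_1 − A_2 + A_3 − A_4, A_1 + A_2 = (J_{n−1} − I_{n−1}) ⊗ J_n, and A_0 + A_3 + A_4 = I_{n−1} ⊗ J_n. Then {A_0, A_1, A_2, A_3, A_4} forms a symmetric association scheme of class 4. -/

import Mathlib

set_option maxHeartbeats 3200000

open Matrix Finset

/-- The decomposition of the symmetric regular biangular matrix `M` (built from the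
outer products `C_i` of a normalized Hadamard matrix of order `n` and the addition
table of `ℤ_{n-1}`) into `(0,1)`-matrices `A_0 = I, A_1, A_2, A_3, A_4` via
`M = A_0 + A_1 - A_2 + A_3 - A_4`, `A_1 + A_2 = (J_{n-1} - I_{n-1}) ⊗ J_n` and
`A_0 + A_3 + A_4 = I_{n-1} ⊗ J_n` yields a symmetric association scheme of class 4:
the matrices sum to `J`, are all symmetric, and their products are nonnegative
integer combinations of `A_0, …, A_4` and commute. -/
theorem symmetric_association_scheme_from_biangular (n : ℕ) (hn : 2 ≤ n)
    (C : Fin n → Matrix (Fin n) (Fin n) ℝ)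
    (hsymm : ∀ i, (C i)ᵀ = C i)
    (hpm : ∀ i a b, C i a b = 1 ∨ C i a b = -1)
    (hC1 : C ⟨0, by omega⟩ = (Matrix.of fun _ _ => (1 : ℝ)))
    (horth : ∀ i j, i ≠ j → C i * C j = 0)
    (hsq : ∀ i, C i * C i = (n : ℝ) • C i)
    (hsumC : (∑ i, C i) = (n : ℝ) • 1)
    (e : Fin (n - 1) → Fin n)
    (he : Function.Injective e)
    (he0 : ∀ a, e a ≠ ⟨0, by omega⟩)
    (M : Matrix (Fin (n - 1) × Fin n) (Fin (n - 1) × Fin n) ℝ)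
    (hM : ∀ (i j : Fin (n - 1)) (a b : Fin n), M (i, a) (j, b) = C (e (i + j)) a b)
    (A : Fin 5 → Matrix (Fin (n - 1) × Fin n) (Fin (n - 1) × Fin n) ℝ)
    (hA0 : A 0 = 1)
    (h01 : ∀ i x y, A i x y = 0 ∨ A i x y = 1)
    (hdecomp : M = A 0 + A 1 - A 2 + A 3 - A 4)
    (h12 : A 1 + A 2 = Matrix.of (fun x y : Fin (n - 1) × Fin n =>
      if x.1 ≠ y.1 then (1 : ℝ) else 0))
    (h034 : A 0 + A 3 + A 4 = Matrix.of (fun x y : Fin (n - 1) × Fin n =>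
      if x.1 = y.1 then (1 : ℝ) else 0)) :
    ((∑ i, A i) = (Matrix.of fun _ _ => (1 : ℝ))) ∧
    (∀ i, (A i)ᵀ = A i) ∧
    (∀ i j, ∃ p : Fin 5 → ℕ, A i * A j = ∑ l, (p l : ℝ) • A l) ∧
    (∀ i j, A i * A j = A j * A i) := by
  set z : Fin n := ⟨0, by omega⟩ with hz
  have hCs : ∀ i a b, C i b a = C i a b := by
    intro i a b; exact congrFun (congrFun (hsymm i) a) b
  have hn0 : (n:ℝ) ≠ 0 := by positivity
  have hCdiag : ∀ i a, C i a a = 1 := by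
    intro i a
    have h := congrFun (congrFun (hsq i) a) a
    rw [mul_apply] at h
    have h2 : ∀ b, C i a b * C i b a = 1 := by
      intro b; rw [hCs i a b]
      rcases hpm i a b with h' | h' <;> rw [h'] <;> norm_num
    rw [Finset.sum_congr rfl (fun b _ => h2 b)] at h
    simp at h
    field_simp at h
    linarith [h]
  have hrow : ∀ k, k ≠ z → ∀ a, ∑ b, C k a b = 0 := by
    intro k hk a
    have h := congrFun (congrFun (horth k z hk) a) a
    rw [mul_apply] at h
    simpa [hC1] using h
  -- divisibility: 4 ∣ n or n = 2
  have hdvd : 4 ∣ n ∨ n = 2 := by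
    by_cases h2 : n = 2
    · right; exact h2
    left
    have hn3 : 3 ≤ n := by omega
    set u1 : Fin n := ⟨1, by omega⟩ with hu1
    set u2 : Fin n := ⟨2, by omega⟩ with hu2
    have hu1z : u1 ≠ z := by simp [hu1, hz, Fin.ext_iff]
    have hu2z : u2 ≠ z := by simp [hu2, hz, Fin.ext_iff]
    have hu12 : u1 ≠ u2 := by simp [hu1, hu2, Fin.ext_iff]
    set S : Finset (Fin n) := univ.filter (fun c => C u1 z c = 1 ∧ C u2 z c = 1) with hS
    have key : (n : ℝ) = 4 * S.card := by
      have expand : ∑ c, (1 + C u1 z c) * (1 + C u2 z c)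
          = (n : ℝ) + (∑ c, C u1 z c) + (∑ c, C u2 z c) + ∑ c, C u1 z c * C u2 z c := by
        have hpt : ∀ c ∈ (univ : Finset (Fin n)), (1 + C u1 z c) * (1 + C u2 z c) = 1 + C u1 z c + C u2 z c + C u1 z c * C u2 z c := fun c _ => by ring
        rw [Finset.sum_congr rfl hpt, Finset.sum_add_distrib, Finset.sum_add_distrib, Finset.sum_add_distrib]
        simp
      have horthe : ∑ c, C u1 z c * C u2 z c = 0 := by
        have h := congrFun (congrFun (horth u1 u2 hu12) z) z
        rw [mul_apply] at h
        calc ∑ c, C u1 z c * C u2 z c = ∑ c, C u1 z c * C u2 c z := by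
              exact Finset.sum_congr rfl fun c _ => by rw [hCs u2 c z]
          _ = 0 := h
      have hsum4 : ∑ c, (1 + C u1 z c) * (1 + C u2 z c) = 4 * S.card := by
        have : ∀ c, (1 + C u1 z c) * (1 + C u2 z c) = if C u1 z c = 1 ∧ C u2 z c = 1 then (4:ℝ) else 0 := by
          intro c
          rcases hpm u1 z c with h1 | h1 <;> rcases hpm u2 z c with h2 | h2 <;>
            simp [h1, h2] <;> norm_num
        rw [Finset.sum_congr rfl (fun c _ => this c), Finset.sum_ite, Finset.sum_const, Finset.sum_const]
        simp [hS, mul_comm]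
      rw [expand, hrow u1 hu1z z, hrow u2 hu2z z, horthe] at hsum4
      linarith
    have : (n : ℝ) = ((4 * S.card : ℕ) : ℝ) := by push_cast; linarith
    exact ⟨S.card, Nat.cast_injective this⟩
  haveI : NeZero (n - 1) := ⟨by omega⟩
  have hcol : ∀ k, k ≠ z → ∀ b, ∑ a, C k a b = 0 := by
    intro k hk b
    calc ∑ a, C k a b = ∑ a, C k b a := Finset.sum_congr rfl fun a _ => hCs k b a
      _ = 0 := hrow k hk b
  set Jm : Matrix (Fin (n-1) × Fin n) (Fin (n-1) × Fin n) ℝ := Matrix.of (fun _ _ => (1:ℝ)) with hJm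
  set D : Matrix (Fin (n-1) × Fin n) (Fin (n-1) × Fin n) ℝ := Matrix.of (fun x y => if x.1 = y.1 then (1:ℝ) else 0) with hD
  set Md : Matrix (Fin (n-1) × Fin n) (Fin (n-1) × Fin n) ℝ := Matrix.of (fun x y => if x.1 = y.1 then M x y else 0) with hMd
  have hc1 : ((n-1:ℕ):ℝ) = (n:ℝ) - 1 := by
    have := Nat.cast_sub (by omega : 1 ≤ n) (R := ℝ); simpa using this
  -- sum over image of e
  have hsum_e : ∑ k : Fin (n-1), C (e k) = (n:ℝ) • 1 - C z := by
    have himg : (univ : Finset (Fin (n-1))).image e = (univ : Finset (Fin n)).erase z := by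
      apply Finset.eq_of_subset_of_card_le
      · intro t ht
        simp only [Finset.mem_image] at ht
        obtain ⟨a, _, rfl⟩ := ht
        exact Finset.mem_erase.2 ⟨he0 a, Finset.mem_univ _⟩
      · rw [Finset.card_erase_of_mem (Finset.mem_univ z), Finset.card_image_of_injective _ he]
        simp
    calc ∑ k : Fin (n-1), C (e k) = ∑ t ∈ (univ : Finset (Fin (n-1))).image e, C t :=
          (Finset.sum_image (fun a _ b _ h => he h)).symm
      _ = ∑ t ∈ (univ : Finset (Fin n)).erase z, C t := by rw [himg]
      _ = (∑ t, C t) - C z := by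
          rw [← Finset.sum_erase_add _ _ (Finset.mem_univ z)]; abel
      _ = (n:ℝ) • 1 - C z := by rw [hsumC]
  -- the multiplication table
  have T_JJ : Jm * Jm = ((n:ℝ)^2 - n) • Jm := by
    ext x y
    simp only [mul_apply, hJm, of_apply, Matrix.smul_apply, smul_eq_mul, mul_one]
    rw [Finset.sum_const, Finset.card_univ]
    simp only [Fintype.card_prod, Fintype.card_fin, nsmul_eq_mul]
    push_cast [hc1]; ring
  have hrow' : ∀ (m : Fin (n-1)) (a : Fin n), ∑ b, C (e m) a b = 0 := fun m a => hrow _ (he0 m) a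
  have hcol' : ∀ (m : Fin (n-1)) (b : Fin n), ∑ a, C (e m) a b = 0 := fun m b => hcol _ (he0 m) b
  have T_JD : Jm * D = (n:ℝ) • Jm := by
    ext ⟨x1,x2⟩ ⟨y1,y2⟩
    simp only [mul_apply, hJm, hD, of_apply, one_mul, Matrix.smul_apply, smul_eq_mul, mul_one]
    rw [Fintype.sum_prod_type]
    simp [apply_ite (fun s : Finset (Fin n) => ((#s : ℕ) : ℝ))]
  have T_DJ : D * Jm = (n:ℝ) • Jm := by
    ext ⟨x1,x2⟩ ⟨y1,y2⟩
    simp only [mul_apply, hJm, hD, of_apply, mul_one, Matrix.smul_apply, smul_eq_mul]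
    rw [Fintype.sum_prod_type]
    simp [apply_ite (fun s : Finset (Fin n) => ((#s : ℕ) : ℝ))]
  have T_DD : D * D = (n:ℝ) • D := by
    ext ⟨x1,x2⟩ ⟨y1,y2⟩
    simp only [mul_apply, hD, of_apply, Matrix.smul_apply, smul_eq_mul]
    rw [Fintype.sum_prod_type]
    simp only [ite_mul, one_mul, zero_mul, Finset.sum_ite_eq, Finset.mem_univ, if_true]
    by_cases h : x1 = y1 <;> simp [h]
  have T_JM : Jm * M = 0 := by
    ext ⟨x1,x2⟩ ⟨y1,y2⟩
    simp only [mul_apply, hJm, of_apply, one_mul, Matrix.zero_apply]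
    rw [Fintype.sum_prod_type]
    simp [hM, hcol']
  have T_MJ : M * Jm = 0 := by
    ext ⟨x1,x2⟩ ⟨y1,y2⟩
    simp only [mul_apply, hJm, of_apply, mul_one, Matrix.zero_apply]
    rw [Fintype.sum_prod_type]
    simp [hM, hrow']
  have T_DM : D * M = 0 := by
    ext ⟨x1,x2⟩ ⟨y1,y2⟩
    simp only [mul_apply, hD, of_apply, Matrix.zero_apply]
    rw [Fintype.sum_prod_type]
    simp only [ite_mul, one_mul, zero_mul, Finset.sum_ite_eq, Finset.mem_univ, if_true]
    simp [hM, hcol']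
  have T_MD : M * D = 0 := by
    ext ⟨x1,x2⟩ ⟨y1,y2⟩
    simp only [mul_apply, hD, of_apply, Matrix.zero_apply]
    rw [Fintype.sum_prod_type]
    simp only [mul_ite, mul_one, mul_zero, Finset.sum_ite_eq, Finset.mem_univ, if_true]
    simp [hM, hrow']
  have T_JMd : Jm * Md = 0 := by
    ext ⟨x1,x2⟩ ⟨y1,y2⟩
    simp only [mul_apply, hJm, hMd, of_apply, one_mul, Matrix.zero_apply]
    rw [Fintype.sum_prod_type]
    simp [hM, hcol']
  have T_MdJ : Md * Jm = 0 := by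
    ext ⟨x1,x2⟩ ⟨y1,y2⟩
    simp only [mul_apply, hJm, hMd, of_apply, mul_one, Matrix.zero_apply]
    rw [Fintype.sum_prod_type]
    simp [hM, hrow']
  have T_DMd : D * Md = 0 := by
    ext ⟨x1,x2⟩ ⟨y1,y2⟩
    simp only [mul_apply, hD, hMd, of_apply, Matrix.zero_apply]
    rw [Fintype.sum_prod_type]
    simp only [ite_mul, one_mul, zero_mul, Finset.sum_ite_eq, Finset.mem_univ, if_true]
    simp [hM, hcol']
  have T_MdD : Md * D = 0 := by
    ext ⟨x1,x2⟩ ⟨y1,y2⟩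
    simp only [mul_apply, hD, hMd, of_apply, Matrix.zero_apply]
    rw [Fintype.sum_prod_type]
    simp only [mul_ite, mul_one, mul_zero, Finset.sum_ite_eq, Finset.mem_univ, if_true]
    simp [hM, hrow']
  have T_MM : M * M = ((n:ℝ)^2) • 1 - (n:ℝ) • D := by
    ext ⟨x1,x2⟩ ⟨y1,y2⟩
    rw [mul_apply, Fintype.sum_prod_type]
    have hterm : ∀ k, ∑ c, M (x1,x2) (k,c) * M (k,c) (y1,y2)
        = (C (e (x1 + k)) * C (e (k + y1))) x2 y2 := by
      intro k
      rw [mul_apply]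
      exact Finset.sum_congr rfl fun c _ => by rw [hM, hM]
    rw [Finset.sum_congr rfl fun k _ => hterm k]
    by_cases hxy : x1 = y1
    · subst hxy
      have hstep : ∀ k, (C (e (x1 + k)) * C (e (k + x1))) x2 y2
          = (n:ℝ) * C (e (x1 + k)) x2 y2 := by
        intro k
        rw [add_comm k x1, hsq]
        simp
      rw [Finset.sum_congr rfl fun k _ => hstep k, ← Finset.mul_sum]
      have hre : ∑ k, C (e (x1 + k)) x2 y2 = ∑ k, C (e k) x2 y2 :=
        Fintype.sum_equiv (Equiv.addLeft x1) _ _ (fun k => rfl)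
      rw [hre]
      have hse := congrFun (congrFun hsum_e x2) y2
      rw [Matrix.sum_apply] at hse
      rw [hse]
      simp only [hC1, hD, Matrix.sub_apply, Matrix.smul_apply, Matrix.one_apply, of_apply, smul_eq_mul,
        Matrix.smul_apply, Matrix.sub_apply, Prod.mk.injEq, true_and]
      by_cases h2 : x2 = y2 <;> simp [h2, Prod.ext_iff] <;> ring
    · have hzero : ∀ k, (C (e (x1 + k)) * C (e (k + y1))) x2 y2 = 0 := by
        intro k
        have hne : e (x1 + k) ≠ e (k + y1) := by
          intro h
          apply hxy
          have := he h
          rw [add_comm x1 k] at this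
          exact add_left_cancel this
        rw [horth _ _ hne]
        simp
      rw [Finset.sum_congr rfl fun k _ => hzero k]
      simp [hD, Matrix.one_apply, Prod.ext_iff, hxy]
  have hCC : ∀ (u v : Fin (n-1)) (a b : Fin n), (∑ c, C (e u) a c * C (e v) c b)
      = if u = v then (n:ℝ) * C (e u) a b else 0 := by
    intro u v a b
    by_cases huv : u = v
    · subst huv
      have := congrFun (congrFun (hsq (e u)) a) b
      rw [mul_apply] at this
      rw [this]
      simp
    · have hne : e u ≠ e v := fun h => huv (he h)
      have := congrFun (congrFun (horth _ _ hne) a) b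
      rw [mul_apply] at this
      rw [this]
      simp [huv]
  have T_MMd : M * Md = (n:ℝ) • Md := by
    ext ⟨x1,x2⟩ ⟨y1,y2⟩
    rw [mul_apply, Fintype.sum_prod_type]
    simp only [hMd, of_apply, mul_ite, mul_zero]
    have hpull : ∀ k : Fin (n-1), (∑ c, if k = y1 then M (x1, x2) (k, c) * M (k, c) (y1, y2) else 0)
        = if k = y1 then ∑ c, M (x1, x2) (k, c) * M (k, c) (y1, y2) else 0 := by
      intro k; split <;> simp
    rw [Finset.sum_congr rfl fun k _ => hpull k]
    simp only [Finset.sum_ite_eq', Finset.mem_univ, if_true]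
    have h2 : ∑ c, M (x1,x2) (y1,c) * M (y1,c) (y1,y2)
        = if x1 + y1 = y1 + y1 then (n:ℝ) * C (e (x1+y1)) x2 y2 else 0 := by
      rw [← hCC]
      exact Finset.sum_congr rfl fun c _ => by rw [hM, hM]
    rw [h2]
    simp only [Matrix.smul_apply, of_apply, smul_eq_mul]
    by_cases hxy : x1 = y1
    · simp [hxy, hM]
    · rw [if_neg (by simpa [add_left_inj] using hxy), if_neg hxy, mul_zero]
  have T_MdM : Md * M = (n:ℝ) • Md := by
    ext ⟨x1,x2⟩ ⟨y1,y2⟩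
    rw [mul_apply, Fintype.sum_prod_type]
    simp only [hMd, of_apply, ite_mul, zero_mul]
    have hpull : ∀ k : Fin (n-1), (∑ c, if x1 = k then M (x1, x2) (k, c) * M (k, c) (y1, y2) else 0)
        = if x1 = k then ∑ c, M (x1, x2) (k, c) * M (k, c) (y1, y2) else 0 := by
      intro k; split <;> simp
    rw [Finset.sum_congr rfl fun k _ => hpull k]
    simp only [Finset.sum_ite_eq, Finset.mem_univ, if_true]
    have h2 : ∑ c, M (x1,x2) (x1,c) * M (x1,c) (y1,y2)
        = if x1 + x1 = x1 + y1 then (n:ℝ) * C (e (x1+x1)) x2 y2 else 0 := by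
      rw [← hCC]
      exact Finset.sum_congr rfl fun c _ => by rw [hM, hM]
    rw [h2]
    simp only [Matrix.smul_apply, of_apply, smul_eq_mul]
    by_cases hxy : x1 = y1
    · subst hxy; simp [hM]
    · rw [if_neg (by simpa [add_right_inj] using hxy), if_neg hxy, mul_zero]
  have T_MdMd : Md * Md = (n:ℝ) • Md := by
    ext ⟨x1,x2⟩ ⟨y1,y2⟩
    rw [mul_apply, Fintype.sum_prod_type]
    simp only [hMd, of_apply, ite_mul, zero_mul, mul_ite, mul_zero]
    have hpull : ∀ k : Fin (n-1), (∑ c, if k = y1 then (if x1 = k then M (x1, x2) (k, c) * M (k, c) (y1, y2) else 0) else 0)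
        = if x1 = k then (if k = y1 then ∑ c, M (x1, x2) (k, c) * M (k, c) (y1, y2) else 0) else 0 := by
      intro k
      rcases eq_or_ne x1 k with h1 | h1 <;> rcases eq_or_ne k y1 with h2 | h2 <;>
        simp [h1, h2]
    rw [Finset.sum_congr rfl fun k _ => hpull k]
    simp only [Finset.sum_ite_eq, Finset.mem_univ, if_true]
    simp only [Matrix.smul_apply, of_apply, smul_eq_mul]
    by_cases hxy : x1 = y1
    · subst hxy
      rw [if_pos rfl, if_pos rfl]
      have h2 : ∑ c, M (x1,x2) (x1,c) * M (x1,c) (x1,y2)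
          = if x1 + x1 = x1 + x1 then (n:ℝ) * C (e (x1+x1)) x2 y2 else 0 := by
        rw [← hCC]
        exact Finset.sum_congr rfl fun c _ => by rw [hM, hM]
      rw [h2, if_pos rfl, hM]
    · rw [if_neg hxy, if_neg hxy, mul_zero]
  -- relations between the A matrices and the basis
  have zero12 : ∀ x y : Fin (n-1) × Fin n, x.1 = y.1 → A 1 x y = 0 ∧ A 2 x y = 0 := by
    intro x y hxy
    have h := congrFun (congrFun h12 x) y
    rw [Matrix.add_apply, of_apply, if_neg (by simpa using hxy)] at h
    rcases h01 1 x y with h1 | h1 <;> rcases h01 2 x y with h2 | h2 <;>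
      constructor <;> linarith
  have zero034 : ∀ x y : Fin (n-1) × Fin n, x.1 ≠ y.1 →
      A 0 x y = 0 ∧ A 3 x y = 0 ∧ A 4 x y = 0 := by
    intro x y hxy
    have h := congrFun (congrFun h034 x) y
    rw [Matrix.add_apply, Matrix.add_apply, hD, of_apply, if_neg hxy] at h
    rcases h01 0 x y with h0 | h0 <;> rcases h01 3 x y with h3 | h3 <;>
      rcases h01 4 x y with h4 | h4 <;> refine ⟨?_, ?_, ?_⟩ <;> linarith
  have hA12 : A 1 + A 2 = Jm - D := by
    rw [h12]
    ext x y
    simp only [hJm, hD, of_apply, Matrix.sub_apply]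
    by_cases h : x.1 = y.1 <;> simp [h]
  have hDA : A 0 + A 3 + A 4 = D := h034
  have hMdA : Md = A 0 + A 3 - A 4 := by
    ext x y
    simp only [hMd, of_apply, Matrix.sub_apply, Matrix.add_apply]
    by_cases hxy : x.1 = y.1
    · rw [if_pos hxy]
      have h := congrFun (congrFun hdecomp x) y
      simp only [Matrix.add_apply, Matrix.sub_apply] at h
      obtain ⟨h1, h2⟩ := zero12 x y hxy
      rw [h, h1, h2]; ring
    · rw [if_neg hxy]
      obtain ⟨g0, g3, g4⟩ := zero034 x y hxy
      rw [g0, g3, g4]; ring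
  have hJA : Jm = A 0 + A 1 + A 2 + A 3 + A 4 := by
    have h : Jm = (A 1 + A 2) + (A 0 + A 3 + A 4) := by rw [hA12, hDA]; abel
    rw [h]; abel
  have hA1s : (2:ℝ) • A 1 = Jm - D + M - Md := by
    have h2 : A 1 - A 2 = M - Md := by rw [hdecomp, hMdA]; abel
    have h : (2:ℝ) • A 1 = (A 1 + A 2) + (A 1 - A 2) := by module
    rw [h, hA12, h2]; abel
  have hA2s : (2:ℝ) • A 2 = Jm - D - M + Md := by
    have h2 : A 1 - A 2 = M - Md := by rw [hdecomp, hMdA]; abel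
    have h : (2:ℝ) • A 2 = (A 1 + A 2) - (A 1 - A 2) := by module
    rw [h, hA12, h2]; abel
  have hA3s : (2:ℝ) • A 3 = D + Md - (2:ℝ) • 1 := by
    have h : (2:ℝ) • A 3 = (A 0 + A 3 + A 4) + (A 0 + A 3 - A 4) - (2:ℝ) • A 0 := by module
    rw [h, hDA, ← hMdA, hA0]
  have hA4s : (2:ℝ) • A 4 = D - Md := by
    have h : (2:ℝ) • A 4 = (A 0 + A 3 + A 4) - (A 0 + A 3 - A 4) := by module
    rw [h, hDA, ← hMdA]
  -- symmetry
  have hMsym : Mᵀ = M := by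
    ext ⟨x1,x2⟩ ⟨y1,y2⟩
    rw [transpose_apply, hM, hM, add_comm y1 x1, hCs]
  have hJsym : Jmᵀ = Jm := by ext x y; simp [hJm]
  have hDsym : Dᵀ = D := by
    ext x y
    simp only [transpose_apply, hD, of_apply]
    by_cases h : x.1 = y.1 <;> simp [h, eq_comm]
  have hMdsym : Mdᵀ = Md := by
    ext x y
    simp only [transpose_apply, hMd, of_apply]
    by_cases h : x.1 = y.1
    · rw [if_pos h.symm, if_pos h, ← transpose_apply M x y, hMsym]
    · rw [if_neg (fun hh => h hh.symm), if_neg h]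
  have two_ne : (2:ℝ) ≠ 0 := by norm_num
  have hAsym : ∀ i, (A i)ᵀ = A i := by
    intro i
    fin_cases i
    · show (A 0)ᵀ = A 0
      rw [hA0, transpose_one]
    · show (A 1)ᵀ = A 1
      apply smul_right_injective _ two_ne
      show (2:ℝ) • (A 1)ᵀ = (2:ℝ) • A 1
      rw [← transpose_smul, hA1s, transpose_sub, transpose_add, transpose_sub,
        hJsym, hDsym, hMsym, hMdsym]
    · show (A 2)ᵀ = A 2
      apply smul_right_injective _ two_ne
      show (2:ℝ) • (A 2)ᵀ = (2:ℝ) • A 2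
      rw [← transpose_smul, hA2s, transpose_add, transpose_sub, transpose_sub,
        hJsym, hDsym, hMsym, hMdsym]
    · show (A 3)ᵀ = A 3
      apply smul_right_injective _ two_ne
      show (2:ℝ) • (A 3)ᵀ = (2:ℝ) • A 3
      rw [← transpose_smul, hA3s, transpose_sub, transpose_add,
        hDsym, hMdsym, transpose_smul, transpose_one]
    · show (A 4)ᵀ = A 4
      apply smul_right_injective _ two_ne
      show (2:ℝ) • (A 4)ᵀ = (2:ℝ) • A 4
      rw [← transpose_smul, hA4s, transpose_sub, hDsym, hMdsym]
  -- conversion of basis to A's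
  have hDA' : D = A 0 + A 3 + A 4 := hDA.symm
  have hIA : (1 : Matrix (Fin (n-1) × Fin n) (Fin (n-1) × Fin n) ℝ) = A 0 := hA0.symm
  have four_ne : (4:ℝ) ≠ 0 := by norm_num
  -- the ten product identities with real coefficients
  have R11 : A 1 * A 1 = ((n:ℝ)^2/2 - n) • A 0 + ((n:ℝ)^2/4 - 3*n/4) • A 1
      + ((n:ℝ)^2/4 - 3*n/4) • A 2 + ((n:ℝ)^2/4 - n) • A 3 + ((n:ℝ)^2/4 - n/2) • A 4 := by
    apply smul_right_injective _ four_ne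
    show (4:ℝ) • (A 1 * A 1) = _
    have hh : (4:ℝ) • (A 1 * A 1) = ((2:ℝ) • A 1) * ((2:ℝ) • A 1) := by
      rw [smul_mul_smul_comm]; norm_num
    rw [hh, hA1s]
    simp only [sub_mul, mul_sub, add_mul, mul_add, smul_mul_assoc, mul_smul_comm,
      one_mul, mul_one]
    simp only [T_JJ, T_JD, T_DJ, T_DD, T_JM, T_MJ, T_DM, T_MD, T_JMd, T_MdJ,
      T_DMd, T_MdD, T_MM, T_MMd, T_MdM, T_MdMd]
    simp only [hJA, hDA', hdecomp, hMdA, hIA]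
    module
  have R12 : A 1 * A 2 = ((n:ℝ)^2/4 - 3*n/4) • A 1 + ((n:ℝ)^2/4 - 3*n/4) • A 2 + ((n:ℝ)^2/4) • A 3 + ((n:ℝ)^2/4 - n/2) • A 4 := by
    apply smul_right_injective _ four_ne
    show (4:ℝ) • (A 1 * A 2) = _
    have hh : (4:ℝ) • (A 1 * A 2) = ((2:ℝ) • A 1) * ((2:ℝ) • A 2) := by
      rw [smul_mul_smul_comm]; norm_num
    rw [hh, hA1s, hA2s]
    simp only [sub_mul, mul_sub, add_mul, mul_add, smul_mul_assoc, mul_smul_comm,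
      one_mul, mul_one]
    simp only [T_JJ, T_JD, T_DJ, T_DD, T_JM, T_MJ, T_DM, T_MD, T_JMd, T_MdJ,
      T_DMd, T_MdD, T_MM, T_MMd, T_MdM, T_MdMd]
    simp only [hJA, hDA', hdecomp, hMdA, hIA]
    module
  have R13 : A 1 * A 3 = ((n:ℝ)/4 - 1) • A 1 + ((n:ℝ)/4) • A 2 := by
    apply smul_right_injective _ four_ne
    show (4:ℝ) • (A 1 * A 3) = _
    have hh : (4:ℝ) • (A 1 * A 3) = ((2:ℝ) • A 1) * ((2:ℝ) • A 3) := by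
      rw [smul_mul_smul_comm]; norm_num
    rw [hh, hA1s, hA3s]
    simp only [sub_mul, mul_sub, add_mul, mul_add, smul_mul_assoc, mul_smul_comm,
      one_mul, mul_one]
    simp only [T_JJ, T_JD, T_DJ, T_DD, T_JM, T_MJ, T_DM, T_MD, T_JMd, T_MdJ,
      T_DMd, T_MdD, T_MM, T_MMd, T_MdM, T_MdMd]
    simp only [hJA, hDA', hdecomp, hMdA, hIA]
    module
  have R14 : A 1 * A 4 = ((n:ℝ)/4) • A 1 + ((n:ℝ)/4) • A 2 := by
    apply smul_right_injective _ four_ne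
    show (4:ℝ) • (A 1 * A 4) = _
    have hh : (4:ℝ) • (A 1 * A 4) = ((2:ℝ) • A 1) * ((2:ℝ) • A 4) := by
      rw [smul_mul_smul_comm]; norm_num
    rw [hh, hA1s, hA4s]
    simp only [sub_mul, mul_sub, add_mul, mul_add, smul_mul_assoc, mul_smul_comm,
      one_mul, mul_one]
    simp only [T_JJ, T_JD, T_DJ, T_DD, T_JM, T_MJ, T_DM, T_MD, T_JMd, T_MdJ,
      T_DMd, T_MdD, T_MM, T_MMd, T_MdM, T_MdMd]
    simp only [hJA, hDA', hdecomp, hMdA, hIA]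
    module
  have R22 : A 2 * A 2 = ((n:ℝ)^2/2 - n) • A 0 + ((n:ℝ)^2/4 - 3*n/4) • A 1 + ((n:ℝ)^2/4 - 3*n/4) • A 2 + ((n:ℝ)^2/4 - n) • A 3 + ((n:ℝ)^2/4 - n/2) • A 4 := by
    apply smul_right_injective _ four_ne
    show (4:ℝ) • (A 2 * A 2) = _
    have hh : (4:ℝ) • (A 2 * A 2) = ((2:ℝ) • A 2) * ((2:ℝ) • A 2) := by
      rw [smul_mul_smul_comm]; norm_num
    rw [hh, hA2s]
    simp only [sub_mul, mul_sub, add_mul, mul_add, smul_mul_assoc, mul_smul_comm,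
      one_mul, mul_one]
    simp only [T_JJ, T_JD, T_DJ, T_DD, T_JM, T_MJ, T_DM, T_MD, T_JMd, T_MdJ,
      T_DMd, T_MdD, T_MM, T_MMd, T_MdM, T_MdMd]
    simp only [hJA, hDA', hdecomp, hMdA, hIA]
    module
  have R23 : A 2 * A 3 = ((n:ℝ)/4) • A 1 + ((n:ℝ)/4 - 1) • A 2 := by
    apply smul_right_injective _ four_ne
    show (4:ℝ) • (A 2 * A 3) = _
    have hh : (4:ℝ) • (A 2 * A 3) = ((2:ℝ) • A 2) * ((2:ℝ) • A 3) := by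
      rw [smul_mul_smul_comm]; norm_num
    rw [hh, hA2s, hA3s]
    simp only [sub_mul, mul_sub, add_mul, mul_add, smul_mul_assoc, mul_smul_comm,
      one_mul, mul_one]
    simp only [T_JJ, T_JD, T_DJ, T_DD, T_JM, T_MJ, T_DM, T_MD, T_JMd, T_MdJ,
      T_DMd, T_MdD, T_MM, T_MMd, T_MdM, T_MdMd]
    simp only [hJA, hDA', hdecomp, hMdA, hIA]
    module
  have R24 : A 2 * A 4 = ((n:ℝ)/4) • A 1 + ((n:ℝ)/4) • A 2 := by
    apply smul_right_injective _ four_ne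
    show (4:ℝ) • (A 2 * A 4) = _
    have hh : (4:ℝ) • (A 2 * A 4) = ((2:ℝ) • A 2) * ((2:ℝ) • A 4) := by
      rw [smul_mul_smul_comm]; norm_num
    rw [hh, hA2s, hA4s]
    simp only [sub_mul, mul_sub, add_mul, mul_add, smul_mul_assoc, mul_smul_comm,
      one_mul, mul_one]
    simp only [T_JJ, T_JD, T_DJ, T_DD, T_JM, T_MJ, T_DM, T_MD, T_JMd, T_MdJ,
      T_DMd, T_MdD, T_MM, T_MMd, T_MdM, T_MdMd]
    simp only [hJA, hDA', hdecomp, hMdA, hIA]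
    module
  have R33 : A 3 * A 3 = ((n:ℝ)/2 - 1) • A 0 + ((n:ℝ)/2 - 2) • A 3 := by
    apply smul_right_injective _ four_ne
    show (4:ℝ) • (A 3 * A 3) = _
    have hh : (4:ℝ) • (A 3 * A 3) = ((2:ℝ) • A 3) * ((2:ℝ) • A 3) := by
      rw [smul_mul_smul_comm]; norm_num
    rw [hh, hA3s]
    simp only [sub_mul, mul_sub, add_mul, mul_add, smul_mul_assoc, mul_smul_comm,
      one_mul, mul_one]
    simp only [T_JJ, T_JD, T_DJ, T_DD, T_JM, T_MJ, T_DM, T_MD, T_JMd, T_MdJ,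
      T_DMd, T_MdD, T_MM, T_MMd, T_MdM, T_MdMd]
    simp only [hJA, hDA', hdecomp, hMdA, hIA]
    module
  have R34 : A 3 * A 4 = ((n:ℝ)/2 - 1) • A 4 := by
    apply smul_right_injective _ four_ne
    show (4:ℝ) • (A 3 * A 4) = _
    have hh : (4:ℝ) • (A 3 * A 4) = ((2:ℝ) • A 3) * ((2:ℝ) • A 4) := by
      rw [smul_mul_smul_comm]; norm_num
    rw [hh, hA3s, hA4s]
    simp only [sub_mul, mul_sub, add_mul, mul_add, smul_mul_assoc, mul_smul_comm,
      one_mul, mul_one]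
    simp only [T_JJ, T_JD, T_DJ, T_DD, T_JM, T_MJ, T_DM, T_MD, T_JMd, T_MdJ,
      T_DMd, T_MdD, T_MM, T_MMd, T_MdM, T_MdMd]
    simp only [hJA, hDA', hdecomp, hMdA, hIA]
    module
  have R44 : A 4 * A 4 = ((n:ℝ)/2) • A 0 + ((n:ℝ)/2) • A 3 := by
    apply smul_right_injective _ four_ne
    show (4:ℝ) • (A 4 * A 4) = _
    have hh : (4:ℝ) • (A 4 * A 4) = ((2:ℝ) • A 4) * ((2:ℝ) • A 4) := by
      rw [smul_mul_smul_comm]; norm_num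
    rw [hh, hA4s]
    simp only [sub_mul, mul_sub, add_mul, mul_add, smul_mul_assoc, mul_smul_comm,
      one_mul, mul_one]
    simp only [T_JJ, T_JD, T_DJ, T_DD, T_JM, T_MJ, T_DM, T_MD, T_JMd, T_MdJ,
      T_DMd, T_MdD, T_MM, T_MMd, T_MdM, T_MdMd]
    simp only [hJA, hDA', hdecomp, hMdA, hIA]
    module
  have hsum5 : ∀ p : Fin 5 → ℕ, (∑ l, (p l:ℝ) • A l)
      = (p 0:ℝ) • A 0 + (p 1:ℝ) • A 1 + (p 2:ℝ) • A 2 + (p 3:ℝ) • A 3 + (p 4:ℝ) • A 4 :=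
    fun p => by rw [Fin.sum_univ_five]
  have hswap : ∀ i j : Fin 5, A j * A i = (A i * A j)ᵀ := by
    intro i j; rw [transpose_mul, hAsym, hAsym]
  have keyswap : ∀ i j : Fin 5, (∃ p : Fin 5 → ℕ, A i * A j = ∑ l, (p l:ℝ) • A l) →
      ∃ p : Fin 5 → ℕ, A j * A i = ∑ l, (p l:ℝ) • A l := by
    rintro i j ⟨p, hp⟩
    refine ⟨p, ?_⟩
    rw [hswap i j, hp, Matrix.transpose_sum]
    exact Finset.sum_congr rfl fun l _ => by rw [transpose_smul, hAsym]
  have keyid : ∀ j : Fin 5, ∃ p : Fin 5 → ℕ, A 0 * A j = ∑ l, (p l:ℝ) • A l := by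
    intro j
    refine ⟨fun l => if l = j then 1 else 0, ?_⟩
    rw [hA0, one_mul]
    rw [Finset.sum_congr rfl (fun l (_ : l ∈ univ) => by
      by_cases h : l = j <;> simp [h] :
      ∀ l ∈ univ, (((if l = j then (1:ℕ) else 0):ℕ):ℝ) • A l = if l = j then A j else 0)]
    simp
  have key : ∀ i j : Fin 5, ∃ p : Fin 5 → ℕ, A i * A j = ∑ l, (p l:ℝ) • A l := by
    rcases hdvd with ⟨m, hm⟩ | h2
    · -- the Hadamard case : n = 4(t+1)
      obtain ⟨t, ht⟩ : ∃ t, m = t + 1 := ⟨m - 1, by omega⟩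
      have hncast : (n:ℝ) = 4*(t:ℝ) + 4 := by rw [hm, ht]; push_cast; ring
      have K11 : ∃ p : Fin 5 → ℕ, A 1 * A 1 = ∑ l, (p l:ℝ) • A l := by
        refine ⟨![8*t^2+12*t+4, (t+1)*(4*t+1), (t+1)*(4*t+1), 4*t^2+4*t, (t+1)*(4*t+2)], ?_⟩
        rw [R11, hsum5]
        match_scalars <;>
          · simp only [Matrix.cons_val_zero, Matrix.cons_val_one, Matrix.head_cons,
              Matrix.cons_val_two, Matrix.tail_cons, Matrix.cons_val_three,
              Matrix.cons_val_four, Matrix.head_fin_const]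
            push_cast
            try rw [hncast]
            ring
      have K12 : ∃ p : Fin 5 → ℕ, A 1 * A 2 = ∑ l, (p l:ℝ) • A l := by
        refine ⟨![0, (t+1)*(4*t+1), (t+1)*(4*t+1), 4*(t+1)^2, (t+1)*(4*t+2)], ?_⟩
        rw [R12, hsum5]
        match_scalars <;>
          · simp only [Matrix.cons_val_zero, Matrix.cons_val_one, Matrix.head_cons,
              Matrix.cons_val_two, Matrix.tail_cons, Matrix.cons_val_three,
              Matrix.cons_val_four, Matrix.head_fin_const]
            push_cast
            try rw [hncast]
            ring
      have K13 : ∃ p : Fin 5 → ℕ, A 1 * A 3 = ∑ l, (p l:ℝ) • A l := by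
        refine ⟨![0, t, t+1, 0, 0], ?_⟩
        rw [R13, hsum5]
        match_scalars <;>
          · simp only [Matrix.cons_val_zero, Matrix.cons_val_one, Matrix.head_cons,
              Matrix.cons_val_two, Matrix.tail_cons, Matrix.cons_val_three,
              Matrix.cons_val_four, Matrix.head_fin_const]
            push_cast
            try rw [hncast]
            ring
      have K14 : ∃ p : Fin 5 → ℕ, A 1 * A 4 = ∑ l, (p l:ℝ) • A l := by
        refine ⟨![0, t+1, t+1, 0, 0], ?_⟩
        rw [R14, hsum5]
        match_scalars <;>
          · simp only [Matrix.cons_val_zero, Matrix.cons_val_one, Matrix.head_cons,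
              Matrix.cons_val_two, Matrix.tail_cons, Matrix.cons_val_three,
              Matrix.cons_val_four, Matrix.head_fin_const]
            push_cast
            try rw [hncast]
            ring
      have K22 : ∃ p : Fin 5 → ℕ, A 2 * A 2 = ∑ l, (p l:ℝ) • A l := by
        refine ⟨![8*t^2+12*t+4, (t+1)*(4*t+1), (t+1)*(4*t+1), 4*t^2+4*t, (t+1)*(4*t+2)], ?_⟩
        rw [R22, hsum5]
        match_scalars <;>
          · simp only [Matrix.cons_val_zero, Matrix.cons_val_one, Matrix.head_cons,
              Matrix.cons_val_two, Matrix.tail_cons, Matrix.cons_val_three,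
              Matrix.cons_val_four, Matrix.head_fin_const]
            push_cast
            try rw [hncast]
            ring
      have K23 : ∃ p : Fin 5 → ℕ, A 2 * A 3 = ∑ l, (p l:ℝ) • A l := by
        refine ⟨![0, t+1, t, 0, 0], ?_⟩
        rw [R23, hsum5]
        match_scalars <;>
          · simp only [Matrix.cons_val_zero, Matrix.cons_val_one, Matrix.head_cons,
              Matrix.cons_val_two, Matrix.tail_cons, Matrix.cons_val_three,
              Matrix.cons_val_four, Matrix.head_fin_const]
            push_cast
            try rw [hncast]
            ring
      have K24 : ∃ p : Fin 5 → ℕ, A 2 * A 4 = ∑ l, (p l:ℝ) • A l := by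
        refine ⟨![0, t+1, t+1, 0, 0], ?_⟩
        rw [R24, hsum5]
        match_scalars <;>
          · simp only [Matrix.cons_val_zero, Matrix.cons_val_one, Matrix.head_cons,
              Matrix.cons_val_two, Matrix.tail_cons, Matrix.cons_val_three,
              Matrix.cons_val_four, Matrix.head_fin_const]
            push_cast
            try rw [hncast]
            ring
      have K33 : ∃ p : Fin 5 → ℕ, A 3 * A 3 = ∑ l, (p l:ℝ) • A l := by
        refine ⟨![2*t+1, 0, 0, 2*t, 0], ?_⟩
        rw [R33, hsum5]
        match_scalars <;>
          · simp only [Matrix.cons_val_zero, Matrix.cons_val_one, Matrix.head_cons,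
              Matrix.cons_val_two, Matrix.tail_cons, Matrix.cons_val_three,
              Matrix.cons_val_four, Matrix.head_fin_const]
            push_cast
            try rw [hncast]
            ring
      have K34 : ∃ p : Fin 5 → ℕ, A 3 * A 4 = ∑ l, (p l:ℝ) • A l := by
        refine ⟨![0, 0, 0, 0, 2*t+1], ?_⟩
        rw [R34, hsum5]
        match_scalars <;>
          · simp only [Matrix.cons_val_zero, Matrix.cons_val_one, Matrix.head_cons,
              Matrix.cons_val_two, Matrix.tail_cons, Matrix.cons_val_three,
              Matrix.cons_val_four, Matrix.head_fin_const]
            push_cast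
            try rw [hncast]
            ring
      have K44 : ∃ p : Fin 5 → ℕ, A 4 * A 4 = ∑ l, (p l:ℝ) • A l := by
        refine ⟨![2*t+2, 0, 0, 2*t+2, 0], ?_⟩
        rw [R44, hsum5]
        match_scalars <;>
          · simp only [Matrix.cons_val_zero, Matrix.cons_val_one, Matrix.head_cons,
              Matrix.cons_val_two, Matrix.tail_cons, Matrix.cons_val_three,
              Matrix.cons_val_four, Matrix.head_fin_const]
            push_cast
            try rw [hncast]
            ring
      intro i j
      fin_cases i <;> fin_cases j
      · exact keyid 0
      · exact keyid 1
      · exact keyid 2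
      · exact keyid 3
      · exact keyid 4
      · exact keyswap 0 1 (keyid 1)
      · exact K11
      · exact K12
      · exact K13
      · exact K14
      · exact keyswap 0 2 (keyid 2)
      · exact keyswap 1 2 K12
      · exact K22
      · exact K23
      · exact K24
      · exact keyswap 0 3 (keyid 3)
      · exact keyswap 1 3 K13
      · exact keyswap 2 3 K23
      · exact K33
      · exact K34
      · exact keyswap 0 4 (keyid 4)
      · exact keyswap 1 4 K14
      · exact keyswap 2 4 K24
      · exact keyswap 3 4 K34
      · exact K44
    · -- the degenerate case n = 2
      subst h2
      have hA1z : A 1 = 0 := by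
        ext x y
        have hx := x.1.isLt
        have hy := y.1.isLt
        exact (zero12 x y (Fin.ext (by omega))).1
      have hA2z : A 2 = 0 := by
        ext x y
        have hx := x.1.isLt
        have hy := y.1.isLt
        exact (zero12 x y (Fin.ext (by omega))).2
      have hCneg : ∀ k, k ≠ z → ∀ a b : Fin 2, a ≠ b → C k a b = -1 := by
        intro k hk a b hab
        have hsum := hrow k hk a
        rw [Fin.sum_univ_two] at hsum
        have hd := hCdiag k a
        fin_cases a <;> fin_cases b <;>
          simp only [Fin.mk_zero, Fin.mk_one, Fin.isValue] at hsum hd hab ⊢ <;>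
          first
          | exact absurd rfl hab
          | linarith
      have hA3z : A 3 = 0 := by
        ext x y
        have h3 := congrFun (congrFun hA3s x) y
        have hx := x.1.isLt
        have hy := y.1.isLt
        have hxy : x.1 = y.1 := Fin.ext (by omega)
        have hMxy : M x y = C (e (x.1 + y.1)) x.2 y.2 := by
          have h := hM x.1 y.1 x.2 y.2
          simpa using h
        simp only [Matrix.smul_apply, Matrix.add_apply, Matrix.sub_apply, hD, hMd, of_apply, if_pos hxy,
          smul_eq_mul, Matrix.zero_apply] at h3 ⊢
        by_cases hxy2 : x.2 = y.2
        · have hxe : x = y := Prod.ext hxy hxy2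
          have h1 : (1 : Matrix (Fin (2-1) × Fin 2) (Fin (2-1) × Fin 2) ℝ) x y = 1 := by
            rw [hxe]; exact one_apply_eq y
          have hMe : M x y = 1 := by rw [hMxy, hxy2]; exact hCdiag _ _
          rw [h1, hMe] at h3; linarith
        · have h1 : (1 : Matrix (Fin (2-1) × Fin 2) (Fin (2-1) × Fin 2) ℝ) x y = 0 :=
            one_apply_ne (fun hh => hxy2 (congrArg Prod.snd hh))
          have hMe : M x y = -1 := by rw [hMxy]; exact hCneg _ (he0 _) _ _ hxy2
          rw [h1, hMe] at h3; linarith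
      have KZ1 : ∀ j : Fin 5, ∃ p : Fin 5 → ℕ, A 1 * A j = ∑ l, (p l:ℝ) • A l :=
        fun j => ⟨fun _ => 0, by rw [hA1z, zero_mul]; simp⟩
      have KZ2 : ∀ j : Fin 5, ∃ p : Fin 5 → ℕ, A 2 * A j = ∑ l, (p l:ℝ) • A l :=
        fun j => ⟨fun _ => 0, by rw [hA2z, zero_mul]; simp⟩
      have KZ3 : ∀ j : Fin 5, ∃ p : Fin 5 → ℕ, A 3 * A j = ∑ l, (p l:ℝ) • A l :=
        fun j => ⟨fun _ => 0, by rw [hA3z, zero_mul]; simp⟩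
      have K44 : ∃ p : Fin 5 → ℕ, A 4 * A 4 = ∑ l, (p l:ℝ) • A l := by
        refine ⟨![1,0,0,1,0], ?_⟩
        rw [R44, hsum5]
        match_scalars <;> norm_num [Matrix.cons_val_zero, Matrix.cons_val_one, Matrix.cons_val_two, Matrix.cons_val_three, Matrix.cons_val_four, Matrix.tail_cons, Matrix.head_cons]
      intro i j
      fin_cases i <;> fin_cases j
      · exact keyid 0
      · exact keyid 1
      · exact keyid 2
      · exact keyid 3
      · exact keyid 4
      · exact keyswap 0 1 (keyid 1)
      · exact KZ1 1
      · exact KZ1 2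
      · exact KZ1 3
      · exact KZ1 4
      · exact keyswap 0 2 (keyid 2)
      · exact keyswap 1 2 (KZ1 2)
      · exact KZ2 2
      · exact KZ2 3
      · exact KZ2 4
      · exact keyswap 0 3 (keyid 3)
      · exact keyswap 1 3 (KZ1 3)
      · exact keyswap 2 3 (KZ2 3)
      · exact KZ3 3
      · exact KZ3 4
      · exact keyswap 0 4 (keyid 4)
      · exact keyswap 1 4 (KZ1 4)
      · exact keyswap 2 4 (KZ2 4)
      · exact keyswap 3 4 (KZ3 4)
      · exact K44
  have comm : ∀ i j : Fin 5, A i * A j = A j * A i := by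
    intro i j
    obtain ⟨p, hp⟩ := key i j
    rw [hswap i j, hp, Matrix.transpose_sum]
    exact (Finset.sum_congr rfl fun l _ => by rw [transpose_smul, hAsym]).symm
  refine ⟨?_, hAsym, key, comm⟩
  rw [Fin.sum_univ_five]
  exact hJA.symm
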